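/- First intermediate identity in the von Mises expansion: let D_{P,F} be D_F with θ_F replaced by θ_P, i.e. D_{P,F} = (1{A=a'}/F(A=a))·(π_F(a|X)/π_F(a'|X))·(Y − μ_F(X)) + (1{A=a}/F(A=a))·(μ_F(X) − θ_P). Then E_P[D_{P,F}] = E_P[(π_F(a|X)/F(A=a))·(π_P(a'|X)/π_F(a'|X) − π_P(a|X)/π_F(a|X))·(μ_P(X) − μ_F(X))]. -/

import Mathlib

open MeasureTheory ProbabilityTheory

/-- Bounded measurable functions are integrable w.r.t. a finite measure. -/
lemma aux_integrable_of_bdd {Ω : Type*} [MeasurableSpace Ω] (μ : Measure Ω)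
    [IsFiniteMeasure μ] {f : Ω → ℝ} (hf : Measurable f) (C : ℝ)
    (hC : ∀ ω, ‖f ω‖ ≤ C) : Integrable f μ :=
  (integrable_const C).mono' hf.aestronglyMeasurable (Filter.Eventually.of_forall hC)

/-- Tower property: for a bounded `m'`-measurable `f` and integrable `g`,
`∫ f·g = ∫ f·h` whenever `h` is a version of `μ[g|m']`. -/
lemma aux_tower {Ω : Type*} [m0 : MeasurableSpace Ω] (μ : Measure Ω)
    [IsProbabilityMeasure μ] {m' : MeasurableSpace Ω}
    (hm' : m' ≤ m0)
    (f g h : Ω → ℝ) (hf : StronglyMeasurable[m'] f) (C : ℝ)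
    (hfb : ∀ ω, ‖f ω‖ ≤ C) (hg : Integrable g μ)
    (hgh : (μ[g|m']) =ᵐ[μ] h) :
    ∫ ω, f ω * g ω ∂μ = ∫ ω, f ω * h ω ∂μ := by
  have h1 : μ[f * g|m'] =ᵐ[μ] f * μ[g|m'] :=
    condExp_stronglyMeasurable_mul_of_bound hm' hf hg C (Filter.Eventually.of_forall hfb)
  have h2 : (f * μ[g|m'] : Ω → ℝ) =ᵐ[μ] fun ω => f ω * h ω := by
    filter_upwards [hgh] with ω hω
    simp [hω]
  calc ∫ ω, f ω * g ω ∂μ = ∫ ω, (f * g) ω ∂μ := rfl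
    _ = ∫ ω, (μ[f * g|m']) ω ∂μ := (integral_condExp hm').symm
    _ = ∫ ω, f ω * h ω ∂μ := integral_congr_ae (h1.trans h2)

theorem vonMises_first_intermediate_identity
    {Ω 𝒳 : Type*} [MeasurableSpace Ω] [StandardBorelSpace Ω]
    [MeasurableSpace 𝒳] [StandardBorelSpace 𝒳]
    (P F : Measure Ω) [IsProbabilityMeasure P] [IsProbabilityMeasure F]
    (m : ℕ) (hm : 1 ≤ m)
    (X : Ω → 𝒳) (A : Ω → Fin m) (Y : Ω → ℝ)
    (hX : Measurable X) (hA : Measurable A) (hY : Measurable Y)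
    (hY01 : ∀ ω, 0 ≤ Y ω ∧ Y ω ≤ 1)
    (a a' : Fin m) (ε : ℝ) (hε : 0 < ε) (hε1 : ε ≤ 1)
    (hPa : 0 < P {ω | A ω = a}) (hFa : 0 < F {ω | A ω = a})
    -- propensity scores under P and F, for b ∈ {a, a'}
    (πP πF : Fin m → 𝒳 → ℝ)
    (hπPmeas : ∀ b ∈ ({a, a'} : Set (Fin m)), Measurable (πP b))
    (hπPrange : ∀ b ∈ ({a, a'} : Set (Fin m)), ∀ x, ε ≤ πP b x ∧ πP b x ≤ 1)
    (hπP : ∀ b ∈ ({a, a'} : Set (Fin m)), (fun ω => πP b (X ω)) =ᵐ[P]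
      P[fun ω => (if A ω = b then (1 : ℝ) else 0) | MeasurableSpace.comap X inferInstance])
    (hπFmeas : ∀ b ∈ ({a, a'} : Set (Fin m)), Measurable (πF b))
    (hπFrange : ∀ b ∈ ({a, a'} : Set (Fin m)), ∀ x, ε ≤ πF b x ∧ πF b x ≤ 1)
    (hπF : ∀ b ∈ ({a, a'} : Set (Fin m)), (fun ω => πF b (X ω)) =ᵐ[F]
      F[fun ω => (if A ω = b then (1 : ℝ) else 0) | MeasurableSpace.comap X inferInstance])
    -- outcome regressions under P and F
    (μP μF : 𝒳 → ℝ)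
    (hμPmeas : Measurable μP) (hμPrange : ∀ x, 0 ≤ μP x ∧ μP x ≤ 1)
    (hμP : (fun ω => μP (X ω) * πP a' (X ω)) =ᵐ[P]
      P[fun ω => (if A ω = a' then (1 : ℝ) else 0) * Y ω | MeasurableSpace.comap X inferInstance])
    (hμFmeas : Measurable μF) (hμFrange : ∀ x, 0 ≤ μF x ∧ μF x ≤ 1)
    (hμF : (fun ω => μF (X ω) * πF a' (X ω)) =ᵐ[F]
      F[fun ω => (if A ω = a' then (1 : ℝ) else 0) * Y ω | MeasurableSpace.comap X inferInstance])
    -- parameters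
    (θP θF : ℝ)
    (hθP : θP = (∫ ω, μP (X ω) * (if A ω = a then (1 : ℝ) else 0) ∂P)
      / (P {ω | A ω = a}).toReal)
    (hθF : θF = (∫ ω, μF (X ω) * (if A ω = a then (1 : ℝ) else 0) ∂F)
      / (F {ω | A ω = a}).toReal)
    -- D_{P,F}: the EIF at F with θ_F replaced by θ_P
    (DPF : Ω → ℝ)
    (hDPF : ∀ ω, DPF ω =
      (if A ω = a' then (1 : ℝ) else 0) / (F {ω' | A ω' = a}).toReal
        * (πF a (X ω) / πF a' (X ω)) * (Y ω - μF (X ω))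
      + (if A ω = a then (1 : ℝ) else 0) / (F {ω' | A ω' = a}).toReal * (μF (X ω) - θP)) :
    (∫ ω, DPF ω ∂P)
      = ∫ ω, πF a (X ω) / (F {ω' | A ω' = a}).toReal
          * (πP a' (X ω) / πF a' (X ω) - πP a (X ω) / πF a (X ω))
          * (μP (X ω) - μF (X ω)) ∂P := by
  classical
  have hma : a ∈ ({a, a'} : Set (Fin m)) := Set.mem_insert _ _
  have hma' : a' ∈ ({a, a'} : Set (Fin m)) := Set.mem_insert_of_mem _ rfl
  set c : ℝ := (F {ω' | A ω' = a}).toReal with hcdef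
  have hm' : MeasurableSpace.comap X inferInstance ≤ ‹MeasurableSpace Ω› := hX.comap_le
  -- measurability of X w.r.t. the comap σ-algebra
  have hXc : @Measurable Ω 𝒳 (MeasurableSpace.comap X inferInstance) _ X :=
    fun s hs => ⟨s, hs, rfl⟩
  have hcm : ∀ {f : 𝒳 → ℝ}, Measurable f →
      StronglyMeasurable[MeasurableSpace.comap X inferInstance] (fun ω => f (X ω)) :=
    fun hf => (hf.comp hXc).stronglyMeasurable
  -- basic bounds
  have hπFa_pos : ∀ x, 0 < πF a x := fun x => lt_of_lt_of_le hε (hπFrange a hma x).1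
  have hπFa'_pos : ∀ x, 0 < πF a' x := fun x => lt_of_lt_of_le hε (hπFrange a' hma' x).1
  have hπPa_pos : ∀ x, 0 < πP a x := fun x => lt_of_lt_of_le hε (hπPrange a hma x).1
  have hπPa'_pos : ∀ x, 0 < πP a' x := fun x => lt_of_lt_of_le hε (hπPrange a' hma' x).1
  -- abbreviations
  set f1 : Ω → ℝ := fun ω => πF a (X ω) / πF a' (X ω) with hf1def
  have hf1b : ∀ ω, ‖f1 ω‖ ≤ 1 / ε := by
    intro ω
    rw [Real.norm_eq_abs, abs_of_nonneg (le_of_lt (div_pos (hπFa_pos _) (hπFa'_pos _)))]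
    exact div_le_div₀ zero_le_one (hπFrange a hma _).2 hε (hπFrange a' hma' _).1
  have hf1m : StronglyMeasurable[MeasurableSpace.comap X inferInstance] f1 :=
    hcm ((hπFmeas a hma).div (hπFmeas a' hma'))
  have hf1M : Measurable f1 :=
    ((hπFmeas a hma).comp hX).div ((hπFmeas a' hma').comp hX)
  have hmFb : ∀ ω, ‖μF (X ω)‖ ≤ 1 := fun ω => by
    rw [Real.norm_eq_abs, abs_of_nonneg (hμFrange _).1]; exact (hμFrange _).2
  have hmPb : ∀ ω, ‖μP (X ω)‖ ≤ 1 := fun ω => by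
    rw [Real.norm_eq_abs, abs_of_nonneg (hμPrange _).1]; exact (hμPrange _).2
  have hπPa'b : ∀ ω, ‖πP a' (X ω)‖ ≤ 1 := fun ω => by
    rw [Real.norm_eq_abs, abs_of_nonneg (le_of_lt (hπPa'_pos _))]
    exact (hπPrange a' hma' _).2
  have hπPab : ∀ ω, ‖πP a (X ω)‖ ≤ 1 := fun ω => by
    rw [Real.norm_eq_abs, abs_of_nonneg (le_of_lt (hπPa_pos _))]
    exact (hπPrange a hma _).2
  have hYb : ∀ ω, ‖Y ω‖ ≤ 1 := fun ω => by
    rw [Real.norm_eq_abs, abs_of_nonneg (hY01 ω).1]; exact (hY01 ω).2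
  -- indicator functions
  set g1 : Ω → ℝ := fun ω => (if A ω = a' then (1 : ℝ) else 0) * Y ω with hg1def
  set g2 : Ω → ℝ := fun ω => if A ω = a' then (1 : ℝ) else 0 with hg2def
  set g3 : Ω → ℝ := fun ω => if A ω = a then (1 : ℝ) else 0 with hg3def
  have hg2m : Measurable g2 := Measurable.ite (hA (measurableSet_singleton a')) measurable_const measurable_const
  have hg3m : Measurable g3 := Measurable.ite (hA (measurableSet_singleton a)) measurable_const measurable_const
  have hg1m : Measurable g1 := hg2m.mul hY
  have hg2b : ∀ ω, ‖g2 ω‖ ≤ 1 := fun ω => by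
    simp only [hg2def]; split <;> simp
  have hg3b : ∀ ω, ‖g3 ω‖ ≤ 1 := fun ω => by
    simp only [hg3def]; split <;> simp
  have hg1b : ∀ ω, ‖g1 ω‖ ≤ 1 := fun ω => by
    simp only [hg1def, norm_mul]
    calc ‖(if A ω = a' then (1:ℝ) else 0)‖ * ‖Y ω‖ ≤ 1 * 1 :=
      mul_le_mul (hg2b ω) (hYb ω) (norm_nonneg _) zero_le_one
    _ = 1 := by ring
  have hg1i : Integrable g1 P := aux_integrable_of_bdd P hg1m 1 hg1b
  have hg2i : Integrable g2 P := aux_integrable_of_bdd P hg2m 1 hg2b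
  have hg3i : Integrable g3 P := aux_integrable_of_bdd P hg3m 1 hg3b
  -- the four tower identities
  have T1 : ∫ ω, f1 ω * g1 ω ∂P = ∫ ω, f1 ω * (μP (X ω) * πP a' (X ω)) ∂P :=
    aux_tower P hm' f1 g1 (fun ω => μP (X ω) * πP a' (X ω)) hf1m (1/ε) hf1b hg1i
      ((hμP.symm))
  have T2 : ∫ ω, (f1 ω * μF (X ω)) * g2 ω ∂P
      = ∫ ω, (f1 ω * μF (X ω)) * πP a' (X ω) ∂P :=
    aux_tower P hm' (fun ω => f1 ω * μF (X ω)) g2 (fun ω => πP a' (X ω))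
      (hf1m.mul (hcm hμFmeas)) (1/ε * 1)
      (fun ω => by
        simpa [norm_mul] using
          mul_le_mul (hf1b ω) (hmFb ω) (norm_nonneg _) (by positivity))
      hg2i ((hπP a' hma').symm)
  have T3 : ∫ ω, μF (X ω) * g3 ω ∂P = ∫ ω, μF (X ω) * πP a (X ω) ∂P :=
    aux_tower P hm' (fun ω => μF (X ω)) g3 (fun ω => πP a (X ω))
      (hcm hμFmeas) 1 hmFb hg3i ((hπP a hma).symm)
  have T4 : ∫ ω, μP (X ω) * g3 ω ∂P = ∫ ω, μP (X ω) * πP a (X ω) ∂P :=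
    aux_tower P hm' (fun ω => μP (X ω)) g3 (fun ω => πP a (X ω))
      (hcm hμPmeas) 1 hmPb hg3i ((hπP a hma).symm)
  -- value of ∫ g3 and the θP identity
  have hsetm : MeasurableSet {ω | A ω = a} := hA (measurableSet_singleton a)
  have hg3int : ∫ ω, g3 ω ∂P = (P {ω | A ω = a}).toReal := by
    have : g3 = Set.indicator {ω | A ω = a} (fun _ => (1:ℝ)) := by
      funext ω; simp [hg3def, Set.indicator_apply, Set.mem_setOf_eq]
    rw [this, integral_indicator_const (1:ℝ) hsetm, smul_eq_mul, mul_one]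
    rfl
  have hcPpos : 0 < (P {ω | A ω = a}).toReal :=
    ENNReal.toReal_pos (ne_of_gt hPa) (measure_ne_top P _)
  have hθPmul : θP * (P {ω | A ω = a}).toReal
      = ∫ ω, μP (X ω) * g3 ω ∂P := by
    rw [hθP, div_mul_cancel₀ _ (ne_of_gt hcPpos)]
  -- integrability of all the pieces
  have hint1 : Integrable (fun ω => f1 ω * g1 ω) P :=
    hg1i.bdd_mul hf1M.aestronglyMeasurable (Filter.Eventually.of_forall hf1b)
  have hint2 : Integrable (fun ω => (f1 ω * μF (X ω)) * g2 ω) P :=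
    hg2i.bdd_mul (hf1M.mul (hμFmeas.comp hX)).aestronglyMeasurable
      (c := 1/ε) (Filter.Eventually.of_forall fun ω => by
        simpa [norm_mul] using
          mul_le_mul (hf1b ω) (hmFb ω) (norm_nonneg _) (by positivity))
  have hint3 : Integrable (fun ω => μF (X ω) * g3 ω) P :=
    hg3i.bdd_mul (hμFmeas.comp hX).aestronglyMeasurable (Filter.Eventually.of_forall hmFb)
  have hint4 : Integrable (fun ω => μP (X ω) * g3 ω) P :=
    hg3i.bdd_mul (hμPmeas.comp hX).aestronglyMeasurable (Filter.Eventually.of_forall hmPb)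
  have hint1' : Integrable (fun ω => f1 ω * (μP (X ω) * πP a' (X ω))) P :=
    ((aux_integrable_of_bdd P ((hμPmeas.comp hX).mul ((hπPmeas a' hma').comp hX)) 1
      (fun ω => by
        simpa [norm_mul] using
          mul_le_mul (hmPb ω) (hπPa'b ω) (norm_nonneg _) zero_le_one)).bdd_mul
      hf1M.aestronglyMeasurable (Filter.Eventually.of_forall hf1b))
  have hint2' : Integrable (fun ω => (f1 ω * μF (X ω)) * πP a' (X ω)) P :=
    ((aux_integrable_of_bdd P ((hπPmeas a' hma').comp hX) 1 hπPa'b).bdd_mul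
      (hf1M.mul (hμFmeas.comp hX)).aestronglyMeasurable
      (c := 1/ε) (Filter.Eventually.of_forall fun ω => by
        simpa [norm_mul] using
          mul_le_mul (hf1b ω) (hmFb ω) (norm_nonneg _) (by positivity)))
  have hint3' : Integrable (fun ω => μF (X ω) * πP a (X ω)) P :=
    aux_integrable_of_bdd P ((hμFmeas.comp hX).mul ((hπPmeas a hma).comp hX)) 1
      (fun ω => by
        simpa [norm_mul] using
          mul_le_mul (hmFb ω) (hπPab ω) (norm_nonneg _) zero_le_one)
  have hint4' : Integrable (fun ω => μP (X ω) * πP a (X ω)) P :=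
    aux_integrable_of_bdd P ((hμPmeas.comp hX).mul ((hπPmeas a hma).comp hX)) 1
      (fun ω => by
        simpa [norm_mul] using
          mul_le_mul (hmPb ω) (hπPab ω) (norm_nonneg _) zero_le_one)
  -- split the left-hand side
  have hL : ∫ ω, DPF ω ∂P
      = (1/c) * ∫ ω, f1 ω * g1 ω ∂P - (1/c) * ∫ ω, (f1 ω * μF (X ω)) * g2 ω ∂P
        + ((1/c) * ∫ ω, μF (X ω) * g3 ω ∂P - (θP/c) * ∫ ω, g3 ω ∂P) := by
    have hpt : ∀ ω, DPF ω
        = (1/c) * (f1 ω * g1 ω) - (1/c) * ((f1 ω * μF (X ω)) * g2 ω)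
          + ((1/c) * (μF (X ω) * g3 ω) - (θP/c) * g3 ω) := by
      intro ω
      rw [hDPF ω]
      simp only [hf1def, hg1def, hg2def, hg3def]
      ring
    have hI1 : Integrable (fun ω => 1/c * (f1 ω * g1 ω)) P := by exact hint1.const_mul _
    have hI2 : Integrable (fun ω => 1/c * ((f1 ω * μF (X ω)) * g2 ω)) P := by
      exact hint2.const_mul _
    have hI3 : Integrable (fun ω => 1/c * (μF (X ω) * g3 ω)) P := by exact hint3.const_mul _
    have hI4 : Integrable (fun ω => (θP/c) * g3 ω) P := by exact hg3i.const_mul _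
    have hI12 : Integrable (fun ω => 1/c * (f1 ω * g1 ω)
        - 1/c * ((f1 ω * μF (X ω)) * g2 ω)) P := by exact hI1.sub hI2
    have hI34 : Integrable (fun ω => 1/c * (μF (X ω) * g3 ω) - (θP/c) * g3 ω) P := by
      exact hI3.sub hI4
    rw [integral_congr_ae (Filter.Eventually.of_forall hpt)]
    rw [integral_add hI12 hI34, integral_sub hI1 hI2, integral_sub hI3 hI4,
      integral_const_mul, integral_const_mul, integral_const_mul, integral_const_mul]
  -- split the right-hand side
  have hR : ∫ ω, πF a (X ω) / (F {ω' | A ω' = a}).toReal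
          * (πP a' (X ω) / πF a' (X ω) - πP a (X ω) / πF a (X ω))
          * (μP (X ω) - μF (X ω)) ∂P
      = (1/c) * ∫ ω, f1 ω * (μP (X ω) * πP a' (X ω)) ∂P
        - (1/c) * ∫ ω, (f1 ω * μF (X ω)) * πP a' (X ω) ∂P
        + ((1/c) * ∫ ω, μF (X ω) * πP a (X ω) ∂P
          - (1/c) * ∫ ω, μP (X ω) * πP a (X ω) ∂P) := by
    have hpt : ∀ ω, πF a (X ω) / (F {ω' | A ω' = a}).toReal
          * (πP a' (X ω) / πF a' (X ω) - πP a (X ω) / πF a (X ω))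
          * (μP (X ω) - μF (X ω))
        = (1/c) * (f1 ω * (μP (X ω) * πP a' (X ω)))
          - (1/c) * ((f1 ω * μF (X ω)) * πP a' (X ω))
          + ((1/c) * (μF (X ω) * πP a (X ω)) - (1/c) * (μP (X ω) * πP a (X ω))) := by
      intro ω
      have h1 : πF a (X ω) ≠ 0 := ne_of_gt (hπFa_pos _)
      have h2 : πF a' (X ω) ≠ 0 := ne_of_gt (hπFa'_pos _)
      have key : πF a (X ω) / πF a (X ω) = 1 := div_self h1
      simp only [hf1def, ← hcdef]
      linear_combination (-(πP a (X ω)) * (μP (X ω) - μF (X ω)) / c) * key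
    have hJ1 : Integrable (fun ω => 1/c * (f1 ω * (μP (X ω) * πP a' (X ω)))) P := by
      exact hint1'.const_mul _
    have hJ2 : Integrable (fun ω => 1/c * ((f1 ω * μF (X ω)) * πP a' (X ω))) P := by
      exact hint2'.const_mul _
    have hJ3 : Integrable (fun ω => 1/c * (μF (X ω) * πP a (X ω))) P := by
      exact hint3'.const_mul _
    have hJ4 : Integrable (fun ω => 1/c * (μP (X ω) * πP a (X ω))) P := by
      exact hint4'.const_mul _
    have hJ12 : Integrable (fun ω => 1/c * (f1 ω * (μP (X ω) * πP a' (X ω)))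
        - 1/c * ((f1 ω * μF (X ω)) * πP a' (X ω))) P := by exact hJ1.sub hJ2
    have hJ34 : Integrable (fun ω => 1/c * (μF (X ω) * πP a (X ω))
        - 1/c * (μP (X ω) * πP a (X ω))) P := by exact hJ3.sub hJ4
    rw [integral_congr_ae (Filter.Eventually.of_forall hpt)]
    rw [integral_add hJ12 hJ34, integral_sub hJ1 hJ2, integral_sub hJ3 hJ4,
      integral_const_mul, integral_const_mul, integral_const_mul, integral_const_mul]
  rw [hL, hR, T1, T2, T3]
  have : (θP/c) * ∫ ω, g3 ω ∂P = (1/c) * ∫ ω, μP (X ω) * πP a (X ω) ∂P := by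
    rw [hg3int, ← T4, ← hθPmul]
    ring
  rw [this]
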